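/- Let 𝒯* ⊆ 𝒯 be an r-test set with m* = |𝒯*| ≥ 2, let #_B ≥ 1 be the number of item pairs with ⊥(a,𝒯*) = r, and let #₀ = r·n(n−1)/2. In any run of SGA producing the sequence T₁,…,T_k, let i be the largest index with #({T₁,…,T_i}) ≥ #_B (taking i = 0 if none exists). Then i < (r/(r+1))·m*·ln((r+1)·#₀/#_B). -/

import Mathlib

open Finset

/-- The set of item pairs: 2-element subsets of the item set `S` (here the whole type `α`). -/
def itemPairs (α : Type*) [Fintype α] [DecidableEq α] : Finset (Finset α) :=
  Finset.univ.filter fun a => a.card = 2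

/-- `⊥(a, F)`: the number of tests in the family `F` that differentiate the item pair `a`,
i.e. the tests `T` with `|T ∩ a| = 1`. -/
def diffBy {α : Type*} [DecidableEq α] (a : Finset α) (F : Finset (Finset α)) : ℕ :=
  (F.filter fun T => (T ∩ a).card = 1).card

/-- `F` is an `r`-test set for the collection `𝒯`: `F ⊆ 𝒯` and every item pair is
differentiated by at least `r` tests of `F`. -/
def IsRTestSet {α : Type*} [Fintype α] [DecidableEq α]
    (r : ℕ) (𝒯 F : Finset (Finset α)) : Prop :=
  F ⊆ 𝒯 ∧ ∀ a ∈ itemPairs α, r ≤ diffBy a F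

/-- The differentiation measure `#(T̄) = ∑_a max (r - ⊥(a,T̄), 0)` (truncated subtraction). -/
def dmeasure {α : Type*} [Fintype α] [DecidableEq α]
    (r : ℕ) (F : Finset (Finset α)) : ℕ :=
  ∑ a ∈ itemPairs α, (r - diffBy a F)

/-- A run of the set cover greedy algorithm SGA: a sequence of distinct tests from `𝒯`,
each chosen greedily to minimize the differentiation measure of the selected family,
selections continue while the measure is positive, and the final measure is `0`. -/
structure SGARun {α : Type*} [Fintype α] [DecidableEq α]
    (r : ℕ) (𝒯 : Finset (Finset α)) (L : List (Finset α)) : Prop where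
  nodup : L.Nodup
  mem : ∀ T ∈ L, T ∈ 𝒯
  greedy : ∀ i : Fin L.length, ∀ T ∈ 𝒯, T ∉ (L.take i).toFinset →
      dmeasure r (insert (L.get i) (L.take i).toFinset) ≤
        dmeasure r (insert T (L.take i).toFinset)
  pos : ∀ i < L.length, 0 < dmeasure r (L.take i).toFinset
  done : dmeasure r L.toFinset = 0

/-! ### Auxiliary lemmas -/

lemma diffBy_mono' {α : Type*} [DecidableEq α] (a : Finset α) {F G : Finset (Finset α)}
    (h : F ⊆ G) : diffBy a F ≤ diffBy a G :=
  Finset.card_le_card (Finset.filter_subset_filter _ h)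

lemma dmeasure_anti' {α : Type*} [Fintype α] [DecidableEq α] (r : ℕ) {F G : Finset (Finset α)}
    (h : F ⊆ G) : dmeasure r G ≤ dmeasure r F :=
  Finset.sum_le_sum fun a _ => Nat.sub_le_sub_left (diffBy_mono' a h) r

lemma diffBy_insert' {α : Type*} [DecidableEq α] (a : Finset α) {F : Finset (Finset α)}
    {T : Finset α} (h : T ∉ F) :
    diffBy a (insert T F) = diffBy a F + (if (T ∩ a).card = 1 then 1 else 0) := by
  unfold diffBy
  rw [Finset.filter_insert]
  split
  · rw [Finset.card_insert_of_notMem (fun hc => h (Finset.mem_filter.1 hc).1)]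
  · simp

lemma diffBy_split' {α : Type*} [DecidableEq α] (a : Finset α) (F G : Finset (Finset α)) :
    diffBy a F ≤ diffBy a (F \ G) + diffBy a G := by
  calc diffBy a F ≤ diffBy a ((F \ G) ∪ G) :=
        diffBy_mono' a (by intro x hx; by_cases h : x ∈ G <;> simp [h, hx])
    _ ≤ diffBy a (F \ G) + diffBy a G := by
        unfold diffBy; rw [Finset.filter_union]; exact Finset.card_union_le _ _

/-- The reduction of the measure caused by adding test `T` to the family `cur`. -/
def sgaRed {α : Type*} [Fintype α] [DecidableEq α]
    (r : ℕ) (cur : Finset (Finset α)) (T : Finset α) : ℕ :=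
  ((itemPairs α).filter fun a => diffBy a cur < r ∧ (T ∩ a).card = 1).card

lemma sgaRed_insert {α : Type*} [Fintype α] [DecidableEq α]
    (r : ℕ) {cur : Finset (Finset α)} {T : Finset α} (h : T ∉ cur) :
    dmeasure r (insert T cur) + sgaRed r cur T = dmeasure r cur := by
  unfold dmeasure sgaRed
  rw [Finset.card_filter, ← Finset.sum_add_distrib]
  refine Finset.sum_congr rfl fun a _ => ?_
  rw [diffBy_insert' a h]
  by_cases h1 : (T ∩ a).card = 1 <;> by_cases h2 : diffBy a cur < r <;>
    simp [h1, h2] <;> omega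

lemma sga_cover {α : Type*} [Fintype α] [DecidableEq α]
    (r : ℕ) (Fstar : Finset (Finset α))
    (hcov : ∀ a ∈ itemPairs α, r ≤ diffBy a Fstar) (cur : Finset (Finset α)) :
    (r + 1) * dmeasure r cur ≤
      r * (∑ T ∈ Fstar \ cur, sgaRed r cur T)
        + r * ((itemPairs α).filter fun a => diffBy a Fstar = r).card := by
  classical
  set P := (itemPairs α).filter (fun a => diffBy a cur < r) with hP
  have hsum : ∑ T ∈ Fstar \ cur, sgaRed r cur T = ∑ a ∈ P, diffBy a (Fstar \ cur) := by
    unfold sgaRed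
    have hfl : ∀ T : Finset α,
        ((itemPairs α).filter fun a => diffBy a cur < r ∧ (T ∩ a).card = 1)
          = P.filter fun a => (T ∩ a).card = 1 := by
      intro T; rw [hP, Finset.filter_filter]
    simp_rw [hfl, Finset.card_filter]
    rw [Finset.sum_comm]
    refine Finset.sum_congr rfl fun a _ => ?_
    rw [diffBy, Finset.card_filter]
  have hdm : dmeasure r cur = ∑ a ∈ P, (r - diffBy a cur) := by
    rw [dmeasure, hP, Finset.sum_filter_of_ne]
    intro a _ h; omega
  have hpoint : ∀ a ∈ P, (r + 1) * (r - diffBy a cur) ≤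
      r * diffBy a (Fstar \ cur) + r * (if diffBy a Fstar = r then 1 else 0) := by
    intro a ha
    obtain ⟨ha1, hd⟩ := Finset.mem_filter.1 ha
    have hF := hcov a ha1
    have hsp := diffBy_split' a Fstar cur
    set u := r - diffBy a cur with hu
    set X := diffBy a (Fstar \ cur) with hX
    by_cases ht : diffBy a Fstar = r
    · rw [if_pos ht, mul_one]
      have hXu : u ≤ X := by omega
      calc (r + 1) * u = r * u + u := by ring
        _ ≤ r * X + r := add_le_add (Nat.mul_le_mul_left _ hXu) (by omega)
    · rw [if_neg ht, mul_zero, add_zero]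
      have hXu : u + 1 ≤ X := by omega
      calc (r + 1) * u = r * u + u := by ring
        _ ≤ r * u + r := by omega
        _ = r * (u + 1) := by ring
        _ ≤ r * X := Nat.mul_le_mul_left _ hXu
  have hBsum : (P.filter fun a => diffBy a Fstar = r).card ≤
      ((itemPairs α).filter fun a => diffBy a Fstar = r).card :=
    Finset.card_le_card (Finset.filter_subset_filter _ (Finset.filter_subset _ _))
  calc (r + 1) * dmeasure r cur
      = ∑ a ∈ P, (r + 1) * (r - diffBy a cur) := by rw [hdm, Finset.mul_sum]
    _ ≤ ∑ a ∈ P, (r * diffBy a (Fstar \ cur) + r * (if diffBy a Fstar = r then 1 else 0)) :=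
        Finset.sum_le_sum hpoint
    _ = r * (∑ a ∈ P, diffBy a (Fstar \ cur))
          + r * (P.filter fun a => diffBy a Fstar = r).card := by
        rw [Finset.sum_add_distrib, Finset.mul_sum, Finset.card_filter, Finset.mul_sum]
    _ ≤ r * (∑ T ∈ Fstar \ cur, sgaRed r cur T)
          + r * ((itemPairs α).filter fun a => diffBy a Fstar = r).card := by
        rw [hsum]
        exact add_le_add_right (Nat.mul_le_mul_left _ hBsum) _

lemma itemPairs_card {α : Type*} [Fintype α] [DecidableEq α] :
    (itemPairs α).card = (Fintype.card α).choose 2 := by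
  rw [itemPairs, ← Finset.powerset_univ, ← Finset.powersetCard_eq_filter,
    Finset.card_powersetCard, Finset.card_univ]

/-- in any run of SGA, every index `i` whose prefix still has measure at least
`#_B` (in particular the largest such index, with `i = 0` if none exists) satisfies
`i < (r/(r+1))·m*·ln((r+1)·#₀/#_B)`. -/
theorem stmt_8 {α : Type*} [Fintype α] [DecidableEq α]
    (r : ℕ) (hr : 1 ≤ r) (hn : 2 ≤ Fintype.card α)
    (𝒯 Fstar : Finset (Finset α)) (hFstar : IsRTestSet r 𝒯 Fstar)
    (hm : 2 ≤ Fstar.card)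
    (B : ℕ) (hBdef : B = ((itemPairs α).filter fun a => diffBy a Fstar = r).card)
    (hB : 1 ≤ B)
    (N0 : ℝ)
    (hN0 : N0 = (r : ℝ) * (Fintype.card α) * ((Fintype.card α : ℝ) - 1) / 2)
    (L : List (Finset α)) (hrun : SGARun r 𝒯 L) :
    ∀ i ≤ L.length, B ≤ dmeasure r (L.take i).toFinset →
      (i : ℝ) < ((r : ℝ) / ((r : ℝ) + 1)) * (Fstar.card : ℝ) *
        Real.log (((r : ℝ) + 1) * N0 / (B : ℝ)) := by
  classical
  obtain ⟨hsub, hcov⟩ := hFstar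
  set m : ℕ → ℕ := fun i => dmeasure r (L.take i).toFinset with hmdef
  -- take successor
  have htake : ∀ i (hi : i < L.length),
      (L.take (i + 1)).toFinset = insert (L.get ⟨i, hi⟩) (L.take i).toFinset := by
    intro i hi
    rw [List.take_succ, List.toFinset_append, List.getElem?_eq_getElem hi]
    simp
  -- the nat step inequality
  have stepN : ∀ i (hi : i < L.length),
      (r + 1) * m i ≤ r * Fstar.card * (m i - m (i + 1)) + r * B ∧ m (i + 1) ≤ m i := by
    intro i hi
    set cur := (L.take i).toFinset with hcur
    have hmono : m (i + 1) ≤ m i := by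
      rw [hmdef]; simp only
      rw [htake i hi]
      exact dmeasure_anti' r (Finset.subset_insert _ _)
    refine ⟨?_, hmono⟩
    have hpos := hrun.pos i hi
    have hne : (Fstar \ cur).Nonempty := by
      rw [Finset.sdiff_nonempty]
      intro hFc
      have : dmeasure r cur = 0 :=
        Finset.sum_eq_zero fun a ha => by
          have := le_trans (hcov a ha) (diffBy_mono' a hFc)
          omega
      exact absurd this hpos.ne'
    obtain ⟨T, hT, hmax⟩ := (Fstar \ cur).exists_max_image (sgaRed r cur) hne
    obtain ⟨hTF, hTc⟩ := Finset.mem_sdiff.1 hT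
    have htot : ∑ S ∈ Fstar \ cur, sgaRed r cur S ≤ Fstar.card * sgaRed r cur T := by
      calc ∑ S ∈ Fstar \ cur, sgaRed r cur S ≤ (Fstar \ cur).card * sgaRed r cur T := by
            rw [← smul_eq_mul]
            exact Finset.sum_le_card_nsmul _ _ _ fun x hx => hmax x hx
        _ ≤ Fstar.card * sgaRed r cur T :=
            Nat.mul_le_mul_right _ (Finset.card_le_card (Finset.sdiff_subset))
    have hred : sgaRed r cur T ≤ m i - m (i + 1) := by
      have heq := sgaRed_insert r hTc
      have hg := hrun.greedy ⟨i, hi⟩ T (hsub hTF) hTc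
      have hm1 : m (i + 1) = dmeasure r (insert (L.get ⟨i, hi⟩) cur) := by
        rw [hmdef]; simp only; rw [htake i hi]
      have : m (i + 1) ≤ dmeasure r (insert T cur) := by rw [hm1]; exact hg
      have hmi : m i = dmeasure r cur := rfl
      omega
    calc (r + 1) * m i ≤ r * (∑ S ∈ Fstar \ cur, sgaRed r cur S) + r * B := by
          rw [hBdef]; exact sga_cover r Fstar hcov cur
      _ ≤ r * (Fstar.card * sgaRed r cur T) + r * B :=
          add_le_add_left (Nat.mul_le_mul_left _ htot) _
      _ = r * Fstar.card * sgaRed r cur T + r * B := by ring_nf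
      _ ≤ r * Fstar.card * (m i - m (i + 1)) + r * B :=
          add_le_add_left (Nat.mul_le_mul_left _ hred) _
  -- real setup
  set R : ℝ := (r : ℝ) with hR
  set Mr : ℝ := (Fstar.card : ℝ) with hMr
  have hR1 : 1 ≤ R := by rw [hR]; exact_mod_cast hr
  have hMr2 : 2 ≤ Mr := by rw [hMr]; exact_mod_cast hm
  set c : ℝ := (R + 1) / (R * Mr) with hc
  set K : ℝ := R * B / (R + 1) with hK
  set x : ℕ → ℝ := fun i => (m i : ℝ) with hx
  have hRM : 0 < R * Mr := by nlinarith
  have hc0 : 0 < c := div_pos (by linarith) hRM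
  have hc1 : c ≤ 1 := by
    rw [hc, div_le_one hRM]; nlinarith
  have hK0 : 0 ≤ K := by
    apply div_nonneg _ (by linarith)
    positivity
  have h1c : (0:ℝ) ≤ 1 - c := by linarith
  have realstep : ∀ i, i < L.length → x (i + 1) - K ≤ (1 - c) * (x i - K) := by
    intro i hi
    obtain ⟨hs, hmono⟩ := stepN i hi
    have hcast : (R + 1) * x i ≤ R * Mr * (x i - x (i + 1)) + R * B := by
      have := hs
      have hsub' : ((m i - m (i + 1) : ℕ) : ℝ) = x i - x (i + 1) := by
        rw [hx]; push_cast [Nat.cast_sub hmono]; ring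
      calc (R + 1) * x i = (((r + 1) * m i : ℕ) : ℝ) := by push_cast; ring
        _ ≤ ((r * Fstar.card * (m i - m (i + 1)) + r * B : ℕ) : ℝ) := by exact_mod_cast hs
        _ = R * Mr * (x i - x (i + 1)) + R * B := by
            push_cast [Nat.cast_sub hmono]; ring
    have hgoal : R * Mr * (x (i + 1) - K) ≤ R * Mr * ((1 - c) * (x i - K)) := by
      have hcM : c * (R * Mr) = R + 1 := by
        rw [hc]; field_simp
      have hKM : K * (R + 1) = R * B := by
        rw [hK]; field_simp
      have hrhs : R * Mr * ((1 - c) * (x i - K))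
          = R * Mr * (x i - K) - (c * (R * Mr)) * (x i - K) := by ring
      rw [hrhs, hcM]
      linarith [hcast, hKM]
    exact le_of_mul_le_mul_left hgoal hRM
  have decay : ∀ i, i ≤ L.length → x i - K ≤ (1 - c) ^ i * (x 0 - K) := by
    intro i
    induction i with
    | zero => intro _; simp
    | succ n ih =>
      intro h
      have hn' := ih (Nat.le_of_succ_le h)
      calc x (n + 1) - K ≤ (1 - c) * (x n - K) := realstep n h
        _ ≤ (1 - c) * ((1 - c) ^ n * (x 0 - K)) := mul_le_mul_of_nonneg_left hn' h1c
        _ = (1 - c) ^ (n + 1) * (x 0 - K) := by ring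
  -- identify x 0 with N0
  have hx0 : x 0 = N0 := by
    have hm0 : m 0 = r * (Fintype.card α).choose 2 := by
      rw [hmdef]
      simp only [List.take_zero, List.toFinset_nil]
      rw [show dmeasure r (∅ : Finset (Finset α)) = ∑ a ∈ itemPairs α, r from
        Finset.sum_congr rfl fun a _ => by simp [diffBy]]
      rw [Finset.sum_const, smul_eq_mul, itemPairs_card, mul_comm]
    rw [hx]; simp only
    rw [hm0, hN0]
    push_cast [Nat.cast_choose_two]
    ring
  have hBcard : B ≤ (itemPairs α).card := by
    rw [hBdef]; exact Finset.card_filter_le _ _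
  have hBN0 : (B : ℝ) ≤ N0 := by
    have h1 : (B : ℝ) ≤ ((itemPairs α).card : ℝ) := by exact_mod_cast hBcard
    have h2 : ((itemPairs α).card : ℝ) ≤ x 0 := by
      rw [hx]; simp only
      have : (itemPairs α).card ≤ m 0 := by
        have hm0 : m 0 = r * (Fintype.card α).choose 2 := by
          rw [hmdef]
          simp only [List.take_zero, List.toFinset_nil]
          rw [show dmeasure r (∅ : Finset (Finset α)) = ∑ a ∈ itemPairs α, r from
            Finset.sum_congr rfl fun a _ => by simp [diffBy]]
          rw [Finset.sum_const, smul_eq_mul, itemPairs_card, mul_comm]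
        rw [hm0, itemPairs_card]
        exact Nat.le_mul_of_pos_left _ hr
      exact_mod_cast this
    linarith [hx0 ▸ h2]
  have hB0 : (0:ℝ) < B := by exact_mod_cast hB
  have hN0pos : (0:ℝ) < N0 := lt_of_lt_of_le hB0 hBN0
  -- main conclusion
  intro i hi hBi
  have hxiB : (B : ℝ) ≤ x i := by rw [hx]; simp only; exact_mod_cast hBi
  have hmain : (B : ℝ) / (R + 1) ≤ (1 - c) ^ i * N0 := by
    have h1 : (B : ℝ) - K ≤ (1 - c) ^ i * (x 0 - K) :=
      le_trans (by linarith) (decay i hi)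
    have h2 : (1 - c) ^ i * (x 0 - K) ≤ (1 - c) ^ i * N0 := by
      apply mul_le_mul_of_nonneg_left _ (pow_nonneg h1c i)
      rw [hx0]; linarith
    have hBK : (B : ℝ) - K = B / (R + 1) := by
      rw [hK]; field_simp; ring
    rw [hBK] at h1
    linarith
  set A : ℝ := (R + 1) * N0 / (B : ℝ) with hA
  have hA1 : 1 < A := by
    rw [hA, lt_div_iff₀ hB0]; nlinarith
  have hRne : R + 1 ≠ 0 := by linarith
  have hRMne : R * Mr ≠ 0 := ne_of_gt hRM
  have hgoal_iff : (R / (R + 1)) * Mr * Real.log A = (1 / c) * Real.log A := by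
    rw [hc]
    field_simp
  rw [hgoal_iff]
  have hlogA : 0 < Real.log A := Real.log_pos hA1
  rcases Nat.eq_zero_or_pos i with hiz | hip
  · subst hiz
    simp only [Nat.cast_zero]
    exact mul_pos (one_div_pos.2 hc0) hlogA
  · -- i ≥ 1 : strict inequality via exp
    have hpow : (1 - c) ^ i < Real.exp (-c) ^ i := by
      apply pow_lt_pow_left₀ _ h1c hip.ne'
      have := Real.add_one_lt_exp (x := -c) (by linarith : (-c : ℝ) ≠ 0)
      linarith
    have hexp : Real.exp (-c) ^ i = Real.exp (-(c * i)) := by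
      rw [← Real.exp_nat_mul]; ring_nf
    have hstrict : (B : ℝ) / (R + 1) < N0 * Real.exp (-(c * i)) := by
      calc (B : ℝ) / (R + 1) ≤ (1 - c) ^ i * N0 := hmain
        _ < Real.exp (-c) ^ i * N0 := by
            exact mul_lt_mul_of_pos_right hpow hN0pos
        _ = N0 * Real.exp (-(c * i)) := by rw [hexp]; ring
    have hexpA : Real.exp (c * i) < A := by
      have hE : (0:ℝ) < Real.exp (-(c * i)) := Real.exp_pos _
      have h3 : (B : ℝ) / (R + 1) * Real.exp (c * i) < N0 := by
        have := mul_lt_mul_of_pos_right hstrict (Real.exp_pos (c * i))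
        rwa [mul_assoc, ← Real.exp_add, neg_add_cancel, Real.exp_zero, mul_one] at this
      rw [hA, lt_div_iff₀ hB0]
      have hR1' : (0:ℝ) < R + 1 := by linarith
      calc Real.exp (c * i) * B = ((B : ℝ) / (R + 1) * Real.exp (c * i)) * (R + 1) := by
            field_simp
        _ < N0 * (R + 1) := by
            apply mul_lt_mul_of_pos_right h3 hR1'
        _ = (R + 1) * N0 := by ring
    have hci : c * i < Real.log A :=
      (Real.lt_log_iff_exp_lt (by linarith)).2 hexpA
    rw [mul_comm (1 / c), mul_one_div, lt_div_iff₀ hc0]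
    linarith [mul_comm c (i : ℝ) ▸ hci]
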